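/- Let Q be a symmetric positive semidefinite n×n real matrix, σ > 0, a ∈ ℝⁿ, J ⊆ {1,…,n}, and let Σ be the diagonal matrix with Σᵢᵢ = 1 if i ∈ J and Σᵢᵢ = 0 otherwise. Write α := ∑_{i∈J} aᵢ² and ρ := α − σ ∑_{i∈J} ∑_{j∈J} aᵢ Qᵢⱼ aⱼ, and assume α ≠ 0 and ρ ≠ 0. Set P := Σ (I_n − α⁻¹ a aᵀ) Σ. Let s ∈ ℝⁿ, g := Qs, and suppose d̂ lies in the column space Ran(Q) of Q and satisfies (Q + σ Q P Q) d̂ = −g. Suppose v : J → ℝ satisfies, for every i ∈ J, σ⁻¹ vᵢ + ∑_{j∈J} Qᵢⱼ vⱼ + (σ/ρ)(∑_{j∈J} Qᵢⱼ aⱼ)(∑_{k∈J} ∑_{j∈J} aₖ Qₖⱼ vⱼ) = gᵢ + (σ/ρ)(∑_{j∈J} Qᵢⱼ aⱼ)(∑_{j∈J} aⱼ gⱼ). Then, writing β := ∑_{k∈J} ∑_{j∈J} aₖ Qₖⱼ vⱼ − ∑_{j∈J} aⱼ gⱼ: (i) for every i ∈ {1,…,n}, (Q d̂)ᵢ = ∑_{j∈J}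 Qᵢⱼ vⱼ − gᵢ + (σβ/ρ) ∑_{j∈J} Qᵢⱼ aⱼ; and (ii) ⟪d̂, Q d̂⟫ = ∑_{i∈J} ∑_{j∈J} vᵢ Qᵢⱼ vⱼ − 2 ∑_{i∈J} vᵢ gᵢ + ⟪s, Q s⟫ + ((2σα − σ² ∑_{i∈J} ∑_{j∈J} aᵢ Qᵢⱼ aⱼ)/ρ²) β². -/

import Mathlib

open Matrix

variable {n : ℕ}

/-- `α = aᵀΣa = ∑_{i∈J} aᵢ²`. -/
def alphaJ (a : Fin n → ℝ) (J : Finset (Fin n)) : ℝ := ∑ i ∈ J, (a i) ^ 2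

/-- `aᵀ_J Q_JJ a_J = ∑_{i,j∈J} aᵢ Qᵢⱼ aⱼ`. -/
def quadJ (Q : Matrix (Fin n) (Fin n) ℝ) (a : Fin n → ℝ) (J : Finset (Fin n)) : ℝ :=
  ∑ i ∈ J, ∑ j ∈ J, a i * Q i j * a j

/-- `ρ = α − σ aᵀ_J Q_JJ a_J`. -/
def rhoJ (Q : Matrix (Fin n) (Fin n) ℝ) (a : Fin n → ℝ) (σ : ℝ) (J : Finset (Fin n)) : ℝ :=
  alphaJ a J - σ * quadJ Q a J

/-- The 0-1 diagonal matrix `Σ` of the inactive index set `J`. -/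
def SigmaJ (J : Finset (Fin n)) : Matrix (Fin n) (Fin n) ℝ :=
  Matrix.diagonal fun i => if i ∈ J then (1 : ℝ) else 0

/-- The HS-Jacobian element `P = Σ(I_n − α⁻¹ a aᵀ)Σ`. -/
noncomputable def Pjac (a : Fin n → ℝ) (J : Finset (Fin n)) :
    Matrix (Fin n) (Fin n) ℝ :=
  SigmaJ J * ((1 : Matrix (Fin n) (Fin n) ℝ) - (alphaJ a J)⁻¹ • vecMulVec a a) * SigmaJ J

/-- `β = aᵀ_J Q_JJ v_J − aᵀ_J g_J`. -/
def betaJ (Q : Matrix (Fin n) (Fin n) ℝ) (a v g : Fin n → ℝ) (J : Finset (Fin n)) : ℝ :=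
  (∑ k ∈ J, ∑ j ∈ J, a k * Q k j * v j) - ∑ j ∈ J, a j * g j

lemma Pjac_mulVec (a : Fin n → ℝ) (J : Finset (Fin n)) (u : Fin n → ℝ) (i : Fin n) :
    (Pjac a J *ᵥ u) i =
      if i ∈ J then u i - (alphaJ a J)⁻¹ * (a i * ∑ k ∈ J, a k * u k) else 0 := by
  classical
  have expand : (Pjac a J *ᵥ u) i
      = ∑ j, (if i ∈ J then (1:ℝ) else 0) *
          ((if i = j then (1:ℝ) else 0) - (alphaJ a J)⁻¹ * (a i * a j)) *
          (if j ∈ J then (1:ℝ) else 0) * u j := by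
    simp only [Matrix.mulVec, dotProduct, Pjac, SigmaJ, Matrix.mul_diagonal,
      Matrix.diagonal_mul, Matrix.sub_apply, Matrix.one_apply, Matrix.smul_apply,
      vecMulVec_apply, smul_eq_mul]
  rw [expand]
  by_cases hi : i ∈ J
  · simp only [hi, if_true]
    have step : ∀ j : Fin n,
        (1:ℝ) * ((if i = j then (1:ℝ) else 0) - (alphaJ a J)⁻¹ * (a i * a j)) *
          (if j ∈ J then (1:ℝ) else 0) * u j
        = (if i = j then (if j ∈ J then u j else 0) else 0)
            - (alphaJ a J)⁻¹ * a i * (if j ∈ J then a j * u j else 0) := by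
      intro j; split_ifs <;> ring
    rw [Finset.sum_congr rfl fun j _ => step j, Finset.sum_sub_distrib,
      Finset.sum_ite_eq, ← Finset.mul_sum, Finset.sum_ite_mem, Finset.univ_inter]
    simp [hi, mul_assoc]
  · simp [hi]

lemma dot_mulVec_symm {Q : Matrix (Fin n) (Fin n) ℝ} (hsym : ∀ i j, Q i j = Q j i)
    (x y : Fin n → ℝ) : x ⬝ᵥ (Q *ᵥ y) = (Q *ᵥ x) ⬝ᵥ y := by
  simp only [dotProduct, Matrix.mulVec, Finset.mul_sum, Finset.sum_mul]
  rw [Finset.sum_comm]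
  exact Finset.sum_congr rfl fun j _ => Finset.sum_congr rfl fun i _ => by
    rw [hsym i j]; ring

/-- Sparse reduction of the semismooth Newton system, case `aᵀΣa ≠ 0`
(`𝒫 = Σ(I − α⁻¹aaᵀ)Σ`): with `g = Qs`, if `d̂ ∈ Ran Q` solves `(Q + σQ𝒫Q)d̂ = −g` and `v`
solves the small `p × p` system, then `Qd̂` and `d̂ᵀQd̂` are given by the sparse formulas. -/
theorem newton_system_sparse_reduction_nondegenerate
    (Q : Matrix (Fin n) (Fin n) ℝ) (hQ : Q.PosSemidef) (σ : ℝ) (hσ : 0 < σ)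
    (a : Fin n → ℝ) (J : Finset (Fin n))
    (hα : alphaJ a J ≠ 0) (hρ : rhoJ Q a σ J ≠ 0)
    (s : Fin n → ℝ) (dhat : Fin n → ℝ)
    (hran : ∃ y, Q.mulVec y = dhat)
    (hd : (Q + σ • (Q * Pjac a J * Q)).mulVec dhat = -(Q.mulVec s))
    (v : Fin n → ℝ)
    (hv : ∀ i ∈ J,
      σ⁻¹ * v i + (∑ j ∈ J, Q i j * v j) +
          σ / rhoJ Q a σ J * (∑ j ∈ J, Q i j * a j) *
            (∑ k ∈ J, ∑ j ∈ J, a k * Q k j * v j) =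
        Q.mulVec s i +
          σ / rhoJ Q a σ J * (∑ j ∈ J, Q i j * a j) * (∑ j ∈ J, a j * Q.mulVec s j)) :
    (∀ i, Q.mulVec dhat i =
      (∑ j ∈ J, Q i j * v j) - Q.mulVec s i +
        σ * betaJ Q a v (Q.mulVec s) J / rhoJ Q a σ J * (∑ j ∈ J, Q i j * a j)) ∧
    dhat ⬝ᵥ Q.mulVec dhat =
      (∑ i ∈ J, ∑ j ∈ J, v i * Q i j * v j) - 2 * (∑ i ∈ J, v i * Q.mulVec s i) +
        s ⬝ᵥ Q.mulVec s +
        (2 * σ * alphaJ a J - σ ^ 2 * quadJ Q a J) / (rhoJ Q a σ J) ^ 2 *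
          (betaJ Q a v (Q.mulVec s) J) ^ 2 := by
  classical
  have hsym : ∀ i j, Q i j = Q j i := fun i j => by
    have h := congrFun (congrFun hQ.1 j) i
    simpa [Matrix.conjTranspose_apply] using h
  have hσσ : σ * σ⁻¹ = 1 := mul_inv_cancel₀ hσ.ne'
  set g : Fin n → ℝ := Q.mulVec s with hgdef
  set α : ℝ := alphaJ a J with hαdef
  set q : ℝ := quadJ Q a J with hqdef
  set ρ : ℝ := rhoJ Q a σ J with hρdef
  set β : ℝ := betaJ Q a v g J with hβdef
  set c : ℝ := σ * β / ρ with hcdef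
  have hρ2 : ρ = α - σ * q := by rw [hρdef, hαdef, hqdef]; rfl
  set t : Fin n → ℝ :=
    fun i => (if i ∈ J then v i else 0) - s i + c * (if i ∈ J then a i else 0) with htdef
  -- (A) pointwise formula for Q *ᵥ t
  have hQt : ∀ i, (Q *ᵥ t) i =
      (∑ j ∈ J, Q i j * v j) - g i + c * (∑ j ∈ J, Q i j * a j) := by
    intro i
    have step : ∀ j : Fin n, Q i j * t j =
        ((if j ∈ J then Q i j * v j else 0) - Q i j * s j)
          + c * (if j ∈ J then Q i j * a j else 0) := by
      intro j; simp only [htdef]; split_ifs <;> ring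
    calc (Q *ᵥ t) i = ∑ j, Q i j * t j := rfl
      _ = ∑ j, (((if j ∈ J then Q i j * v j else 0) - Q i j * s j)
            + c * (if j ∈ J then Q i j * a j else 0)) :=
        Finset.sum_congr rfl fun j _ => step j
      _ = (∑ j ∈ J, Q i j * v j) - g i + c * (∑ j ∈ J, Q i j * a j) := by
        rw [Finset.sum_add_distrib, Finset.sum_sub_distrib, ← Finset.mul_sum,
          Finset.sum_ite_mem, Finset.sum_ite_mem, Finset.univ_inter]
        rfl
  -- (B) on J, (Q *ᵥ t) i = -σ⁻¹ v i
  have hQtJ : ∀ i ∈ J, (Q *ᵥ t) i = -(σ⁻¹ * v i) := by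
    intro i hi
    rw [hQt i]
    have h := hv i hi
    simp only [hcdef, hβdef, betaJ]
    linear_combination h
  -- (C) ∑_{k∈J} a k * (Q *ᵥ t) k = α * β / ρ
  have haQt : (∑ k ∈ J, a k * (Q *ᵥ t) k) = α * β / ρ := by
    have step : ∀ k : Fin n, a k * ((∑ j ∈ J, Q k j * v j) - g k + c * (∑ j ∈ J, Q k j * a j))
        = ((∑ j ∈ J, a k * Q k j * v j) - a k * g k) + c * (∑ j ∈ J, a k * Q k j * a j) := by
      intro k
      rw [mul_add, mul_sub, mul_left_comm (a k) c, Finset.mul_sum, Finset.mul_sum]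
      simp only [← mul_assoc]
    have expand : (∑ k ∈ J, a k * (Q *ᵥ t) k)
        = ((∑ k ∈ J, ∑ j ∈ J, a k * Q k j * v j) - ∑ k ∈ J, a k * g k) + c * q := by
      rw [Finset.sum_congr rfl fun k _ => by rw [hQt k, step k],
        Finset.sum_add_distrib, Finset.sum_sub_distrib, ← Finset.mul_sum, hqdef]
      rfl
    rw [expand]
    have hb : ((∑ k ∈ J, ∑ j ∈ J, a k * Q k j * v j) - ∑ k ∈ J, a k * g k) = β := by
      rw [hβdef]; rfl
    rw [hb, hcdef]
    field_simp
    linear_combination β * hρ2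
  -- (D) the matrix equation for t
  have hPQt : ∀ j, (Pjac a J *ᵥ (Q *ᵥ t)) j
      = if j ∈ J then -(σ⁻¹ * v j) - α⁻¹ * (a j * (α * β / ρ)) else 0 := by
    intro j
    rw [Pjac_mulVec, ← hαdef, haQt]
    by_cases hj : j ∈ J
    · simp only [hj, if_true, hQtJ j hj]
    · simp [hj]
  have hαα : α⁻¹ * α = 1 := inv_mul_cancel₀ hα
  have hQPQt : ∀ i, ((Q * Pjac a J * Q) *ᵥ t) i
      = -(σ⁻¹ * (∑ j ∈ J, Q i j * v j) + β/ρ * (∑ j ∈ J, Q i j * a j)) := by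
    intro i
    rw [← Matrix.mulVec_mulVec, ← Matrix.mulVec_mulVec]
    have step : ∀ j : Fin n, Q i j * (Pjac a J *ᵥ (Q *ᵥ t)) j
        = if j ∈ J then -(σ⁻¹ * (Q i j * v j) + β/ρ * (Q i j * a j)) else 0 := by
      intro j
      rw [hPQt j]
      by_cases hj : j ∈ J
      · simp only [hj, if_true]
        linear_combination (-(Q i j * a j * β/ρ)) * hαα
      · simp [hj]
    calc (Q *ᵥ (Pjac a J *ᵥ (Q *ᵥ t))) i = ∑ j, Q i j * (Pjac a J *ᵥ (Q *ᵥ t)) j := rfl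
      _ = ∑ j, if j ∈ J then -(σ⁻¹ * (Q i j * v j) + β/ρ * (Q i j * a j)) else 0 :=
          Finset.sum_congr rfl fun j _ => step j
      _ = ∑ j ∈ J, -(σ⁻¹ * (Q i j * v j) + β/ρ * (Q i j * a j)) := by
          rw [Finset.sum_ite_mem, Finset.univ_inter]
      _ = -(σ⁻¹ * (∑ j ∈ J, Q i j * v j) + β/ρ * (∑ j ∈ J, Q i j * a j)) := by
          rw [Finset.sum_neg_distrib, Finset.sum_add_distrib, ← Finset.mul_sum,
            ← Finset.mul_sum]
  have hQPt : (Q + σ • (Q * Pjac a J * Q)) *ᵥ t = -g := by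
    funext i
    have expand : ((Q + σ • (Q * Pjac a J * Q)) *ᵥ t) i
        = (Q *ᵥ t) i + σ * ((Q * Pjac a J * Q) *ᵥ t) i := by
      rw [Matrix.add_mulVec, Matrix.smul_mulVec]
      simp [smul_eq_mul]
    rw [expand, hQt i, hQPQt i, hcdef]
    have : (-g) i = -(g i) := rfl
    rw [this]
    linear_combination (-(∑ j ∈ J, Q i j * v j)) * hσσ
  -- (E) uniqueness: Q *ᵥ dhat = Q *ᵥ t
  have hw0 : (Q + σ • (Q * Pjac a J * Q)) *ᵥ (dhat - t) = 0 := by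
    rw [Matrix.mulVec_sub, hd, hQPt, sub_self]
  set w : Fin n → ℝ := dhat - t with hwdef
  set z : Fin n → ℝ := Q *ᵥ w with hzdef
  have hdot0 : w ⬝ᵥ (Q *ᵥ w) + σ * (z ⬝ᵥ (Pjac a J *ᵥ z)) = 0 := by
    have expand : w ⬝ᵥ ((Q + σ • (Q * Pjac a J * Q)) *ᵥ w)
        = w ⬝ᵥ (Q *ᵥ w) + σ * (z ⬝ᵥ (Pjac a J *ᵥ z)) := by
      rw [Matrix.add_mulVec, dotProduct_add, Matrix.smul_mulVec, dotProduct_smul,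
        smul_eq_mul, ← Matrix.mulVec_mulVec, ← Matrix.mulVec_mulVec,
        dot_mulVec_symm hsym, dot_mulVec_symm hsym w (Pjac a J *ᵥ (Q *ᵥ w)), hzdef]
    rw [← expand, hw0, dotProduct_zero]
  have hQw_nonneg : 0 ≤ w ⬝ᵥ (Q *ᵥ w) := by
    have h := hQ.dotProduct_mulVec_nonneg w
    simpa using h
  have hα0 : 0 ≤ α := Finset.sum_nonneg fun i _ => sq_nonneg (a i)
  have hαpos : 0 < α := lt_of_le_of_ne hα0 (Ne.symm hα)
  have hPz_nonneg : 0 ≤ z ⬝ᵥ (Pjac a J *ᵥ z) := by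
    have expand : z ⬝ᵥ (Pjac a J *ᵥ z)
        = (∑ j ∈ J, (z j)^2) - (α⁻¹ * ∑ k ∈ J, a k * z k) * (∑ k ∈ J, a k * z k) := by
      have step : ∀ j : Fin n, z j * (Pjac a J *ᵥ z) j
          = if j ∈ J then (z j)^2 - α⁻¹ * (∑ k ∈ J, a k * z k) * (a j * z j) else 0 := by
        intro j
        rw [Pjac_mulVec, ← hαdef]
        by_cases hj : j ∈ J
        · simp only [hj, if_true]; ring
        · simp [hj]
      calc z ⬝ᵥ (Pjac a J *ᵥ z) = ∑ j, z j * (Pjac a J *ᵥ z) j := rfl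
        _ = ∑ j, if j ∈ J then (z j)^2 - α⁻¹ * (∑ k ∈ J, a k * z k) * (a j * z j) else 0 :=
            Finset.sum_congr rfl fun j _ => step j
        _ = ∑ j ∈ J, ((z j)^2 - α⁻¹ * (∑ k ∈ J, a k * z k) * (a j * z j)) := by
            rw [Finset.sum_ite_mem, Finset.univ_inter]
        _ = (∑ j ∈ J, (z j)^2) - (α⁻¹ * ∑ k ∈ J, a k * z k) * (∑ k ∈ J, a k * z k) := by
            rw [Finset.sum_sub_distrib, ← Finset.mul_sum]
    rw [expand, sub_nonneg]
    have hcs : (∑ k ∈ J, a k * z k)^2 ≤ (∑ k ∈ J, (a k)^2) * ∑ k ∈ J, (z k)^2 :=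
      Finset.sum_mul_sq_le_sq_mul_sq J a z
    rw [mul_assoc, ← sq, inv_mul_le_iff₀ hαpos]
    exact hcs
  have hQw0 : Q *ᵥ w = 0 := by
    have h1 : 0 ≤ σ * (z ⬝ᵥ (Pjac a J *ᵥ z)) := mul_nonneg hσ.le hPz_nonneg
    have h2 : w ⬝ᵥ (Q *ᵥ w) = 0 := le_antisymm (by linarith) hQw_nonneg
    have := (hQ.dotProduct_mulVec_zero_iff w).mp (by simpa using h2)
    exact this
  have hQd : Q *ᵥ dhat = Q *ᵥ t := by
    have h0 : Q *ᵥ dhat - Q *ᵥ t = 0 := by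
      rw [← Matrix.mulVec_sub, ← hwdef]; exact hQw0
    exact sub_eq_zero.mp h0
  -- dot products against t
  have hdotu : ∀ u : Fin n → ℝ, u ⬝ᵥ t
      = (∑ i ∈ J, u i * v i) - u ⬝ᵥ s + c * ∑ i ∈ J, u i * a i := by
    intro u
    calc u ⬝ᵥ t = ∑ i, (((if i ∈ J then u i * v i else 0) - u i * s i)
          + c * (if i ∈ J then u i * a i else 0)) :=
        Finset.sum_congr rfl fun i _ => by simp only [htdef]; split_ifs <;> ring
      _ = (∑ i ∈ J, u i * v i) - u ⬝ᵥ s + c * ∑ i ∈ J, u i * a i := by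
        rw [Finset.sum_add_distrib, Finset.sum_sub_distrib, ← Finset.mul_sum,
          Finset.sum_ite_mem, Finset.sum_ite_mem, Finset.univ_inter]
        rfl
  have hswap : (∑ i ∈ J, ∑ j ∈ J, v i * Q i j * a j)
      = ∑ k ∈ J, ∑ j ∈ J, a k * Q k j * v j := by
    rw [Finset.sum_comm]
    exact Finset.sum_congr rfl fun k _ => Finset.sum_congr rfl fun j _ => by
      rw [hsym j k]; ring
  have P1 : ∑ i ∈ J, (Q *ᵥ t) i * v i
      = (∑ i ∈ J, ∑ j ∈ J, v i * Q i j * v j) - (∑ i ∈ J, v i * g i)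
          + c * (∑ k ∈ J, ∑ j ∈ J, a k * Q k j * v j) := by
    have step : ∀ i, (Q *ᵥ t) i * v i
        = ((∑ j ∈ J, v i * Q i j * v j) - v i * g i)
            + c * (∑ j ∈ J, v i * Q i j * a j) := by
      intro i
      have e1 : ∀ (b : Fin n → ℝ), (∑ j ∈ J, v i * Q i j * b j)
          = v i * ∑ j ∈ J, Q i j * b j := by
        intro b; rw [Finset.mul_sum]; exact Finset.sum_congr rfl fun j _ => by ring
      rw [hQt i, e1 v, e1 a]; ring
    rw [Finset.sum_congr rfl fun i _ => step i, Finset.sum_add_distrib,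
      Finset.sum_sub_distrib, ← Finset.mul_sum, hswap]
  have P2 : (Q *ᵥ t) ⬝ᵥ s = (∑ i ∈ J, v i * g i) - s ⬝ᵥ g + c * (∑ j ∈ J, a j * g j) := by
    rw [← dot_mulVec_symm hsym t s, ← hgdef, dotProduct_comm t g, hdotu g]
    have c1 : ∑ i ∈ J, g i * v i = ∑ i ∈ J, v i * g i :=
      Finset.sum_congr rfl fun i _ => mul_comm _ _
    have c2 : ∑ i ∈ J, g i * a i = ∑ i ∈ J, a i * g i :=
      Finset.sum_congr rfl fun i _ => mul_comm _ _
    rw [c1, c2, dotProduct_comm g s]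
  have P3 : ∑ i ∈ J, (Q *ᵥ t) i * a i = α * β / ρ := by
    rw [← haQt]; exact Finset.sum_congr rfl fun k _ => mul_comm _ _
  have key : (Q *ᵥ t) ⬝ᵥ t
      = ((∑ i ∈ J, ∑ j ∈ J, v i * Q i j * v j) - (∑ i ∈ J, v i * g i)
          + c * (∑ k ∈ J, ∑ j ∈ J, a k * Q k j * v j))
        - ((∑ i ∈ J, v i * g i) - s ⬝ᵥ g + c * (∑ j ∈ J, a j * g j))
        + c * (α * β / ρ) := by
    rw [hdotu (Q *ᵥ t), P1, P2, P3]
  have hβ2 : β = (∑ k ∈ J, ∑ j ∈ J, a k * Q k j * v j) - ∑ j ∈ J, a j * g j := hβdef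
  have hρ3 : α - σ * q ≠ 0 := by rw [← hρ2]; exact hρ
  constructor
  · intro i
    rw [hQd]
    exact hQt i
  · have start : dhat ⬝ᵥ (Q *ᵥ dhat) = (Q *ᵥ t) ⬝ᵥ t := by
      rw [hQd, dot_mulVec_symm hsym dhat t, hQd]
    rw [start, key, hcdef, hβ2, hρ2]
    field_simp
    ring
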